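/- Let n ≥ 0 and A ⊆ {0,1}ⁿ ⊆ ℤⁿ. Then the additive energy E(A) = |{(a₁,a₂,a₃,a₄) ∈ A⁴ : a₁+a₂ = a₃+a₄}| satisfies E(A) ≤ |A|^(log_2 6). -/

import Mathlib

/-- The embedding of the cube `{0,1}ⁿ` into `ℤⁿ`. -/
def cubeToZ {n : ℕ} (x : Fin n → Bool) : Fin n → ℤ := fun i => if x i then 1 else 0

/-- The additive energy of a subset of the cube `{0,1}ⁿ ⊆ ℤⁿ`: the number of quadruples
`(a₁,a₂,a₃,a₄) ∈ A⁴` with `a₁ + a₂ = a₃ + a₄` in `ℤⁿ`. -/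
def cubeEnergy {n : ℕ} (A : Finset (Fin n → Bool)) : ℕ :=
  ((A ×ˢ A ×ˢ A ×ˢ A).filter
    (fun q => cubeToZ q.1 + cubeToZ q.2.1 = cubeToZ q.2.2.1 + cubeToZ q.2.2.2)).card

open Real Finset


noncomputable def cE : ℝ := Real.log 6 / Real.log 2

lemma cE_rpow : (2:ℝ) ^ cE = 6 := by
  rw [show cE = Real.logb 2 6 from rfl]
  exact Real.rpow_logb (by norm_num) (by norm_num) (by norm_num)

lemma rdiv_le {a b : ℝ} (p q : ℕ) (hq : 0 < q) (ha : 0 ≤ a) (hb : 0 ≤ b)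
    (h : a ^ p ≤ b ^ q) : a ^ ((p:ℝ)/(q:ℝ)) ≤ b := by
  have hq' : (0:ℝ) < q := by exact_mod_cast hq
  have h1 : a ^ ((p:ℝ)/(q:ℝ)) = (a ^ (p:ℕ)) ^ ((1:ℝ)/(q:ℝ)) := by
    rw [← Real.rpow_natCast a p, ← Real.rpow_mul ha]
    ring_nf
  rw [h1]
  calc (a ^ (p:ℕ)) ^ ((1:ℝ)/(q:ℝ)) ≤ (b ^ (q:ℕ)) ^ ((1:ℝ)/(q:ℝ)) := by
        apply Real.rpow_le_rpow (by positivity) h (by positivity)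
    _ = b := by
        rw [← Real.rpow_natCast b q, ← Real.rpow_mul hb]
        rw [mul_one_div, div_self (ne_of_gt hq'), Real.rpow_one]

lemma le_rdiv {a b : ℝ} (p q : ℕ) (hq : 0 < q) (ha : 0 ≤ a) (hb : 0 ≤ b)
    (h : b ^ q ≤ a ^ p) : b ≤ a ^ ((p:ℝ)/(q:ℝ)) := by
  have hq' : (0:ℝ) < q := by exact_mod_cast hq
  have h1 : a ^ ((p:ℝ)/(q:ℝ)) = (a ^ (p:ℕ)) ^ ((1:ℝ)/(q:ℝ)) := by
    rw [← Real.rpow_natCast a p, ← Real.rpow_mul ha]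
    ring_nf
  rw [h1]
  calc b = (b ^ (q:ℕ)) ^ ((1:ℝ)/(q:ℝ)) := by
        rw [← Real.rpow_natCast b q, ← Real.rpow_mul hb]
        rw [mul_one_div, div_self (ne_of_gt hq'), Real.rpow_one]
    _ ≤ (a ^ (p:ℕ)) ^ ((1:ℝ)/(q:ℝ)) := by
        apply Real.rpow_le_rpow (by positivity) h (by positivity)

lemma cE_lb : (31:ℝ)/12 ≤ cE := by
  have h : (2:ℝ) ^ ((31:ℝ)/12) ≤ 6 := by
    have := rdiv_le (a := (2:ℝ)) (b := 6) 31 12 (by norm_num) (by norm_num) (by norm_num)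
      (by norm_num)
    exact_mod_cast this
  rw [← cE_rpow] at h
  exact (Real.rpow_le_rpow_left_iff (by norm_num : (1:ℝ) < 2)).mp h

lemma cE_ub : cE ≤ (44:ℝ)/17 := by
  have h : (6:ℝ) ≤ (2:ℝ) ^ ((44:ℝ)/17) := by
    have := le_rdiv (a := (2:ℝ)) (b := 6) 44 17 (by norm_num) (by norm_num) (by norm_num)
      (by norm_num)
    exact_mod_cast this
  rw [← cE_rpow] at h
  exact (Real.rpow_le_rpow_left_iff (by norm_num : (1:ℝ) < 2)).mp h

lemma bern_upper {p s : ℝ} (hp : 1 ≤ p) (hs : 1 ≤ s) :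
    s ^ p - 1 ≤ p * s ^ (p - 1) * (s - 1) := by
  have hs0 : (0:ℝ) < s := by linarith
  have ht : (-1:ℝ) ≤ (1 - s)/s := by
    rw [le_div_iff₀ hs0]; nlinarith
  have hB := one_add_mul_self_le_rpow_one_add ht hp
  have h1 : (1:ℝ) + (1-s)/s = s⁻¹ := by field_simp; ring
  rw [h1, Real.inv_rpow (le_of_lt hs0)] at hB
  have hsp : (0:ℝ) < s ^ p := Real.rpow_pos_of_pos hs0 p
  have h2 : s ^ p * (s ^ p)⁻¹ = 1 := mul_inv_cancel₀ (ne_of_gt hsp)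
  have h3 : s ^ p / s = s ^ (p - 1) := by
    rw [Real.rpow_sub hs0, Real.rpow_one]
  have h4 := mul_le_mul_of_nonneg_left hB (le_of_lt hsp)
  rw [mul_add, h2] at h4
  have h5 : s ^ p * (p * ((1 - s)/s)) = p * s ^ (p-1) * (1 - s) := by
    rw [← h3]; field_simp
  rw [h5] at h4
  nlinarith

lemma key_region1 {s : ℝ} (hs : 1 ≤ s) (hs2 : s ≤ 6/5) :
    s ^ cE - 1 ≤ (s - 1) * (s + 1) ^ (cE - 1) := by
  have hs0 : (0:ℝ) < s := by linarith
  have hcl := cE_lb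
  have hcu := cE_ub
  have h1 := bern_upper (p := cE) (by linarith) hs
  have e1 : (s+1) ^ (cE - 1) = (1 + 1/s) ^ (cE - 1) * s ^ (cE - 1) := by
    rw [← Real.mul_rpow (by positivity) (le_of_lt hs0)]
    congr 1
    field_simp
  have e2 : (11/6:ℝ) ≤ 1 + 1/s := by
    have : (5/6:ℝ) ≤ 1/s := by rw [le_div_iff₀ hs0]; linarith
    linarith
  have e4 : ((44:ℝ)/17) ≤ ((11:ℝ)/6) ^ ((19:ℝ)/12) := by
    have := le_rdiv (a := (11:ℝ)/6) (b := (44:ℝ)/17) 19 12 (by norm_num) (by norm_num)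
      (by norm_num) (by norm_num)
    exact_mod_cast this
  have e3 : ((11:ℝ)/6) ^ ((19:ℝ)/12) ≤ (1 + 1/s) ^ (cE - 1) := by
    calc ((11:ℝ)/6) ^ ((19:ℝ)/12) ≤ (1 + 1/s) ^ ((19:ℝ)/12) :=
          Real.rpow_le_rpow (by norm_num) e2 (by norm_num)
      _ ≤ (1 + 1/s) ^ (cE - 1) := by
          apply Real.rpow_le_rpow_of_exponent_le (by linarith) (by linarith)
  have h6 : cE * s ^ (cE - 1) ≤ (s + 1) ^ (cE - 1) := by
    rw [e1]
    have hsp : (0:ℝ) ≤ s ^ (cE - 1) := le_of_lt (Real.rpow_pos_of_pos hs0 _)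
    have : cE ≤ (1 + 1/s) ^ (cE - 1) := by linarith
    exact mul_le_mul_of_nonneg_right this hsp
  have hsp : (0:ℝ) ≤ s ^ (cE - 1) := le_of_lt (Real.rpow_pos_of_pos hs0 _)
  nlinarith [mul_le_mul_of_nonneg_right h6 (by linarith : (0:ℝ) ≤ s - 1)]

lemma key_region3 {s : ℝ} (hs : 3 ≤ s) :
    s ^ cE - 1 ≤ (s - 1) * (s + 1) ^ (cE - 1) := by
  have hs0 : (0:ℝ) < s := by linarith
  have hcl := cE_lb
  have hcu := cE_ub
  have hBern : (1:ℝ) + (cE - 1) * (1/s) ≤ (1 + 1/s) ^ (cE - 1) :=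
    one_add_mul_self_le_rpow_one_add (le_trans (by norm_num : (-1:ℝ) ≤ 0) (by positivity)) (by linarith)
  have e1 : (s+1) ^ (cE - 1) = (1 + 1/s) ^ (cE - 1) * s ^ (cE - 1) := by
    rw [← Real.mul_rpow (by positivity) (le_of_lt hs0)]
    congr 1
    field_simp
  set u := s ^ (cE - 2) with hu_def
  have hu : 0 < u := Real.rpow_pos_of_pos hs0 _
  have e5 : s ^ (cE - 1) = s * u := by
    rw [hu_def, show cE - 1 = 1 + (cE - 2) by ring, Real.rpow_one_add' (le_of_lt hs0)
      (by intro h; nlinarith)]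
  have e6 : s ^ cE = s * (s * u) := by
    rw [show cE = 1 + (cE - 1) by ring, Real.rpow_one_add' (le_of_lt hs0)
      (by intro h; nlinarith), e5]
  have h9 : (7:ℝ)/4 ≤ (cE - 2) * s := by
    have := mul_le_mul (by linarith : (7:ℝ)/12 ≤ cE - 2) hs (by norm_num) (by linarith)
    linarith
  rw [e6, e1, e5]
  have key : (s - 1) * ((1 + (cE - 1) * (1/s)) * (s * u)) ≤ (s-1) * ((1 + 1/s) ^ (cE - 1) * (s * u)) := by
    apply mul_le_mul_of_nonneg_left _ (by linarith)
    exact mul_le_mul_of_nonneg_right hBern (by positivity)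
  have expand : (s - 1) * ((1 + (cE - 1) * (1/s)) * (s * u)) = (s*(s*u)) - 1 + (((cE-2)*s - (cE-1))*u + 1) := by
    field_simp
    ring
  nlinarith [mul_nonneg (le_of_lt hu) (by linarith : (0:ℝ) ≤ (cE-2)*s - (7:ℝ)/4)]

lemma key_iv_0 {s : ℝ} (ha : (6/5:ℝ) ≤ s) (hb : s ≤ (31/25:ℝ)) :
    s ^ cE - 1 ≤ (s - 1) * (s + 1) ^ (cE - 1) := by
  have hs0 : (0:ℝ) < s := by linarith
  have hcl := cE_lb
  have hcu := cE_ub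
  have hA : (34847/10000:ℝ) ≤ (s+1) ^ (cE - 1) := by
    have e4 : (34847/10000:ℝ) ≤ (11/5:ℝ) ^ ((19:ℝ)/12) := by
      have := le_rdiv (a := (11/5:ℝ)) (b := (34847/10000:ℝ)) 19 12 (by norm_num) (by norm_num)
        (by norm_num) (by norm_num)
      exact_mod_cast this
    calc (34847/10000:ℝ) ≤ (11/5:ℝ) ^ ((19:ℝ)/12) := e4
      _ ≤ (s+1) ^ ((19:ℝ)/12) := Real.rpow_le_rpow (by norm_num) (by linarith) (by norm_num)
      _ ≤ (s+1) ^ (cE-1) := Real.rpow_le_rpow_of_exponent_le (by linarith) (by linarith)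
  have hD : s ^ (cE-1) ≤ (7037/5000:ℝ) := by
    have e5 : (31/25:ℝ) ^ ((27:ℝ)/17) ≤ (7037/5000:ℝ) := by
      have := rdiv_le (a := (31/25:ℝ)) (b := (7037/5000:ℝ)) 27 17 (by norm_num) (by norm_num)
        (by norm_num) (by norm_num)
      exact_mod_cast this
    calc s ^ (cE-1) ≤ s ^ ((27:ℝ)/17) :=
          Real.rpow_le_rpow_of_exponent_le (by linarith) (by linarith)
      _ ≤ (31/25:ℝ) ^ ((27:ℝ)/17) := Real.rpow_le_rpow (by linarith) hb (by norm_num)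
      _ ≤ (7037/5000:ℝ) := e5
  have hsc : s ^ cE = s * s ^ (cE - 1) := by
    rw [show cE = 1 + (cE - 1) by ring, Real.rpow_one_add' (le_of_lt hs0) (by intro h; nlinarith)]
    ring_nf
  have h1 : s ^ cE ≤ s * (7037/5000:ℝ) := by
    rw [hsc]; exact mul_le_mul_of_nonneg_left hD (le_of_lt hs0)
  have h2 : (s-1) * (34847/10000:ℝ) ≤ (s-1) * (s+1) ^ (cE-1) :=
    mul_le_mul_of_nonneg_left hA (by linarith)
  have h3 : (6/5:ℝ) * ((34847/10000:ℝ) - (7037/5000:ℝ)) ≤ s * ((34847/10000:ℝ) - (7037/5000:ℝ)) :=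
    mul_le_mul_of_nonneg_right ha (by norm_num)
  linarith [h1, h2, h3]

lemma key_iv_1 {s : ℝ} (ha : (31/25:ℝ) ≤ s) (hb : s ≤ (129/100:ℝ)) :
    s ^ cE - 1 ≤ (s - 1) * (s + 1) ^ (cE - 1) := by
  have hs0 : (0:ℝ) < s := by linarith
  have hcl := cE_lb
  have hcu := cE_ub
  have hA : (7171/2000:ℝ) ≤ (s+1) ^ (cE - 1) := by
    have e4 : (7171/2000:ℝ) ≤ (56/25:ℝ) ^ ((19:ℝ)/12) := by
      have := le_rdiv (a := (56/25:ℝ)) (b := (7171/2000:ℝ)) 19 12 (by norm_num) (by norm_num)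
        (by norm_num) (by norm_num)
      exact_mod_cast this
    calc (7171/2000:ℝ) ≤ (56/25:ℝ) ^ ((19:ℝ)/12) := e4
      _ ≤ (s+1) ^ ((19:ℝ)/12) := Real.rpow_le_rpow (by norm_num) (by linarith) (by norm_num)
      _ ≤ (s+1) ^ (cE-1) := Real.rpow_le_rpow_of_exponent_le (by linarith) (by linarith)
  have hD : s ^ (cE-1) ≤ (7493/5000:ℝ) := by
    have e5 : (129/100:ℝ) ^ ((27:ℝ)/17) ≤ (7493/5000:ℝ) := by
      have := rdiv_le (a := (129/100:ℝ)) (b := (7493/5000:ℝ)) 27 17 (by norm_num) (by norm_num)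
        (by norm_num) (by norm_num)
      exact_mod_cast this
    calc s ^ (cE-1) ≤ s ^ ((27:ℝ)/17) :=
          Real.rpow_le_rpow_of_exponent_le (by linarith) (by linarith)
      _ ≤ (129/100:ℝ) ^ ((27:ℝ)/17) := Real.rpow_le_rpow (by linarith) hb (by norm_num)
      _ ≤ (7493/5000:ℝ) := e5
  have hsc : s ^ cE = s * s ^ (cE - 1) := by
    rw [show cE = 1 + (cE - 1) by ring, Real.rpow_one_add' (le_of_lt hs0) (by intro h; nlinarith)]
    ring_nf
  have h1 : s ^ cE ≤ s * (7493/5000:ℝ) := by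
    rw [hsc]; exact mul_le_mul_of_nonneg_left hD (le_of_lt hs0)
  have h2 : (s-1) * (7171/2000:ℝ) ≤ (s-1) * (s+1) ^ (cE-1) :=
    mul_le_mul_of_nonneg_left hA (by linarith)
  have h3 : (31/25:ℝ) * ((7171/2000:ℝ) - (7493/5000:ℝ)) ≤ s * ((7171/2000:ℝ) - (7493/5000:ℝ)) :=
    mul_le_mul_of_nonneg_right ha (by norm_num)
  linarith [h1, h2, h3]

lemma key_iv_2 {s : ℝ} (ha : (129/100:ℝ) ≤ s) (hb : s ≤ (67/50:ℝ)) :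
    s ^ cE - 1 ≤ (s - 1) * (s + 1) ^ (cE - 1) := by
  have hs0 : (0:ℝ) < s := by linarith
  have hcl := cE_lb
  have hcu := cE_ub
  have hA : (37131/10000:ℝ) ≤ (s+1) ^ (cE - 1) := by
    have e4 : (37131/10000:ℝ) ≤ (229/100:ℝ) ^ ((19:ℝ)/12) := by
      have := le_rdiv (a := (229/100:ℝ)) (b := (37131/10000:ℝ)) 19 12 (by norm_num) (by norm_num)
        (by norm_num) (by norm_num)
      exact_mod_cast this
    calc (37131/10000:ℝ) ≤ (229/100:ℝ) ^ ((19:ℝ)/12) := e4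
      _ ≤ (s+1) ^ ((19:ℝ)/12) := Real.rpow_le_rpow (by norm_num) (by linarith) (by norm_num)
      _ ≤ (s+1) ^ (cE-1) := Real.rpow_le_rpow_of_exponent_le (by linarith) (by linarith)
  have hD : s ^ (cE-1) ≤ (15919/10000:ℝ) := by
    have e5 : (67/50:ℝ) ^ ((27:ℝ)/17) ≤ (15919/10000:ℝ) := by
      have := rdiv_le (a := (67/50:ℝ)) (b := (15919/10000:ℝ)) 27 17 (by norm_num) (by norm_num)
        (by norm_num) (by norm_num)
      exact_mod_cast this
    calc s ^ (cE-1) ≤ s ^ ((27:ℝ)/17) :=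
          Real.rpow_le_rpow_of_exponent_le (by linarith) (by linarith)
      _ ≤ (67/50:ℝ) ^ ((27:ℝ)/17) := Real.rpow_le_rpow (by linarith) hb (by norm_num)
      _ ≤ (15919/10000:ℝ) := e5
  have hsc : s ^ cE = s * s ^ (cE - 1) := by
    rw [show cE = 1 + (cE - 1) by ring, Real.rpow_one_add' (le_of_lt hs0) (by intro h; nlinarith)]
    ring_nf
  have h1 : s ^ cE ≤ s * (15919/10000:ℝ) := by
    rw [hsc]; exact mul_le_mul_of_nonneg_left hD (le_of_lt hs0)
  have h2 : (s-1) * (37131/10000:ℝ) ≤ (s-1) * (s+1) ^ (cE-1) :=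
    mul_le_mul_of_nonneg_left hA (by linarith)
  have h3 : (129/100:ℝ) * ((37131/10000:ℝ) - (15919/10000:ℝ)) ≤ s * ((37131/10000:ℝ) - (15919/10000:ℝ)) :=
    mul_le_mul_of_nonneg_right ha (by norm_num)
  linarith [h1, h2, h3]

lemma key_iv_3 {s : ℝ} (ha : (67/50:ℝ) ≤ s) (hb : s ≤ (7/5:ℝ)) :
    s ^ cE - 1 ≤ (s - 1) * (s + 1) ^ (cE - 1) := by
  have hs0 : (0:ℝ) < s := by linarith
  have hcl := cE_lb
  have hcu := cE_ub
  have hA : (38423/10000:ℝ) ≤ (s+1) ^ (cE - 1) := by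
    have e4 : (38423/10000:ℝ) ≤ (117/50:ℝ) ^ ((19:ℝ)/12) := by
      have := le_rdiv (a := (117/50:ℝ)) (b := (38423/10000:ℝ)) 19 12 (by norm_num) (by norm_num)
        (by norm_num) (by norm_num)
      exact_mod_cast this
    calc (38423/10000:ℝ) ≤ (117/50:ℝ) ^ ((19:ℝ)/12) := e4
      _ ≤ (s+1) ^ ((19:ℝ)/12) := Real.rpow_le_rpow (by norm_num) (by linarith) (by norm_num)
      _ ≤ (s+1) ^ (cE-1) := Real.rpow_le_rpow_of_exponent_le (by linarith) (by linarith)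
  have hD : s ^ (cE-1) ≤ (8533/5000:ℝ) := by
    have e5 : (7/5:ℝ) ^ ((27:ℝ)/17) ≤ (8533/5000:ℝ) := by
      have := rdiv_le (a := (7/5:ℝ)) (b := (8533/5000:ℝ)) 27 17 (by norm_num) (by norm_num)
        (by norm_num) (by norm_num)
      exact_mod_cast this
    calc s ^ (cE-1) ≤ s ^ ((27:ℝ)/17) :=
          Real.rpow_le_rpow_of_exponent_le (by linarith) (by linarith)
      _ ≤ (7/5:ℝ) ^ ((27:ℝ)/17) := Real.rpow_le_rpow (by linarith) hb (by norm_num)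
      _ ≤ (8533/5000:ℝ) := e5
  have hsc : s ^ cE = s * s ^ (cE - 1) := by
    rw [show cE = 1 + (cE - 1) by ring, Real.rpow_one_add' (le_of_lt hs0) (by intro h; nlinarith)]
    ring_nf
  have h1 : s ^ cE ≤ s * (8533/5000:ℝ) := by
    rw [hsc]; exact mul_le_mul_of_nonneg_left hD (le_of_lt hs0)
  have h2 : (s-1) * (38423/10000:ℝ) ≤ (s-1) * (s+1) ^ (cE-1) :=
    mul_le_mul_of_nonneg_left hA (by linarith)
  have h3 : (67/50:ℝ) * ((38423/10000:ℝ) - (8533/5000:ℝ)) ≤ s * ((38423/10000:ℝ) - (8533/5000:ℝ)) :=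
    mul_le_mul_of_nonneg_right ha (by norm_num)
  linarith [h1, h2, h3]

lemma key_iv_4 {s : ℝ} (ha : (7/5:ℝ) ≤ s) (hb : s ≤ (147/100:ℝ)) :
    s ^ cE - 1 ≤ (s - 1) * (s + 1) ^ (cE - 1) := by
  have hs0 : (0:ℝ) < s := by linarith
  have hcl := cE_lb
  have hcu := cE_ub
  have hA : (19997/5000:ℝ) ≤ (s+1) ^ (cE - 1) := by
    have e4 : (19997/5000:ℝ) ≤ (12/5:ℝ) ^ ((19:ℝ)/12) := by
      have := le_rdiv (a := (12/5:ℝ)) (b := (19997/5000:ℝ)) 19 12 (by norm_num) (by norm_num)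
        (by norm_num) (by norm_num)
      exact_mod_cast this
    calc (19997/5000:ℝ) ≤ (12/5:ℝ) ^ ((19:ℝ)/12) := e4
      _ ≤ (s+1) ^ ((19:ℝ)/12) := Real.rpow_le_rpow (by norm_num) (by linarith) (by norm_num)
      _ ≤ (s+1) ^ (cE-1) := Real.rpow_le_rpow_of_exponent_le (by linarith) (by linarith)
  have hD : s ^ (cE-1) ≤ (18441/10000:ℝ) := by
    have e5 : (147/100:ℝ) ^ ((27:ℝ)/17) ≤ (18441/10000:ℝ) := by
      have := rdiv_le (a := (147/100:ℝ)) (b := (18441/10000:ℝ)) 27 17 (by norm_num) (by norm_num)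
        (by norm_num) (by norm_num)
      exact_mod_cast this
    calc s ^ (cE-1) ≤ s ^ ((27:ℝ)/17) :=
          Real.rpow_le_rpow_of_exponent_le (by linarith) (by linarith)
      _ ≤ (147/100:ℝ) ^ ((27:ℝ)/17) := Real.rpow_le_rpow (by linarith) hb (by norm_num)
      _ ≤ (18441/10000:ℝ) := e5
  have hsc : s ^ cE = s * s ^ (cE - 1) := by
    rw [show cE = 1 + (cE - 1) by ring, Real.rpow_one_add' (le_of_lt hs0) (by intro h; nlinarith)]
    ring_nf
  have h1 : s ^ cE ≤ s * (18441/10000:ℝ) := by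
    rw [hsc]; exact mul_le_mul_of_nonneg_left hD (le_of_lt hs0)
  have h2 : (s-1) * (19997/5000:ℝ) ≤ (s-1) * (s+1) ^ (cE-1) :=
    mul_le_mul_of_nonneg_left hA (by linarith)
  have h3 : (7/5:ℝ) * ((19997/5000:ℝ) - (18441/10000:ℝ)) ≤ s * ((19997/5000:ℝ) - (18441/10000:ℝ)) :=
    mul_le_mul_of_nonneg_right ha (by norm_num)
  linarith [h1, h2, h3]

lemma key_iv_5 {s : ℝ} (ha : (147/100:ℝ) ≤ s) (hb : s ≤ (31/20:ℝ)) :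
    s ^ cE - 1 ≤ (s - 1) * (s + 1) ^ (cE - 1) := by
  have hs0 : (0:ℝ) < s := by linarith
  have hcl := cE_lb
  have hcu := cE_ub
  have hA : (41857/10000:ℝ) ≤ (s+1) ^ (cE - 1) := by
    have e4 : (41857/10000:ℝ) ≤ (247/100:ℝ) ^ ((19:ℝ)/12) := by
      have := le_rdiv (a := (247/100:ℝ)) (b := (41857/10000:ℝ)) 19 12 (by norm_num) (by norm_num)
        (by norm_num) (by norm_num)
      exact_mod_cast this
    calc (41857/10000:ℝ) ≤ (247/100:ℝ) ^ ((19:ℝ)/12) := e4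
      _ ≤ (s+1) ^ ((19:ℝ)/12) := Real.rpow_le_rpow (by norm_num) (by linarith) (by norm_num)
      _ ≤ (s+1) ^ (cE-1) := Real.rpow_le_rpow_of_exponent_le (by linarith) (by linarith)
  have hD : s ^ (cE-1) ≤ (1003/500:ℝ) := by
    have e5 : (31/20:ℝ) ^ ((27:ℝ)/17) ≤ (1003/500:ℝ) := by
      have := rdiv_le (a := (31/20:ℝ)) (b := (1003/500:ℝ)) 27 17 (by norm_num) (by norm_num)
        (by norm_num) (by norm_num)
      exact_mod_cast this
    calc s ^ (cE-1) ≤ s ^ ((27:ℝ)/17) :=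
          Real.rpow_le_rpow_of_exponent_le (by linarith) (by linarith)
      _ ≤ (31/20:ℝ) ^ ((27:ℝ)/17) := Real.rpow_le_rpow (by linarith) hb (by norm_num)
      _ ≤ (1003/500:ℝ) := e5
  have hsc : s ^ cE = s * s ^ (cE - 1) := by
    rw [show cE = 1 + (cE - 1) by ring, Real.rpow_one_add' (le_of_lt hs0) (by intro h; nlinarith)]
    ring_nf
  have h1 : s ^ cE ≤ s * (1003/500:ℝ) := by
    rw [hsc]; exact mul_le_mul_of_nonneg_left hD (le_of_lt hs0)
  have h2 : (s-1) * (41857/10000:ℝ) ≤ (s-1) * (s+1) ^ (cE-1) :=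
    mul_le_mul_of_nonneg_left hA (by linarith)
  have h3 : (147/100:ℝ) * ((41857/10000:ℝ) - (1003/500:ℝ)) ≤ s * ((41857/10000:ℝ) - (1003/500:ℝ)) :=
    mul_le_mul_of_nonneg_right ha (by norm_num)
  linarith [h1, h2, h3]

lemma key_iv_6 {s : ℝ} (ha : (31/20:ℝ) ≤ s) (hb : s ≤ (41/25:ℝ)) :
    s ^ cE - 1 ≤ (s - 1) * (s + 1) ^ (cE - 1) := by
  have hs0 : (0:ℝ) < s := by linarith
  have hcl := cE_lb
  have hcu := cE_ub
  have hA : (44023/10000:ℝ) ≤ (s+1) ^ (cE - 1) := by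
    have e4 : (44023/10000:ℝ) ≤ (51/20:ℝ) ^ ((19:ℝ)/12) := by
      have := le_rdiv (a := (51/20:ℝ)) (b := (44023/10000:ℝ)) 19 12 (by norm_num) (by norm_num)
        (by norm_num) (by norm_num)
      exact_mod_cast this
    calc (44023/10000:ℝ) ≤ (51/20:ℝ) ^ ((19:ℝ)/12) := e4
      _ ≤ (s+1) ^ ((19:ℝ)/12) := Real.rpow_le_rpow (by norm_num) (by linarith) (by norm_num)
      _ ≤ (s+1) ^ (cE-1) := Real.rpow_le_rpow_of_exponent_le (by linarith) (by linarith)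
  have hD : s ^ (cE-1) ≤ (21941/10000:ℝ) := by
    have e5 : (41/25:ℝ) ^ ((27:ℝ)/17) ≤ (21941/10000:ℝ) := by
      have := rdiv_le (a := (41/25:ℝ)) (b := (21941/10000:ℝ)) 27 17 (by norm_num) (by norm_num)
        (by norm_num) (by norm_num)
      exact_mod_cast this
    calc s ^ (cE-1) ≤ s ^ ((27:ℝ)/17) :=
          Real.rpow_le_rpow_of_exponent_le (by linarith) (by linarith)
      _ ≤ (41/25:ℝ) ^ ((27:ℝ)/17) := Real.rpow_le_rpow (by linarith) hb (by norm_num)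
      _ ≤ (21941/10000:ℝ) := e5
  have hsc : s ^ cE = s * s ^ (cE - 1) := by
    rw [show cE = 1 + (cE - 1) by ring, Real.rpow_one_add' (le_of_lt hs0) (by intro h; nlinarith)]
    ring_nf
  have h1 : s ^ cE ≤ s * (21941/10000:ℝ) := by
    rw [hsc]; exact mul_le_mul_of_nonneg_left hD (le_of_lt hs0)
  have h2 : (s-1) * (44023/10000:ℝ) ≤ (s-1) * (s+1) ^ (cE-1) :=
    mul_le_mul_of_nonneg_left hA (by linarith)
  have h3 : (31/20:ℝ) * ((44023/10000:ℝ) - (21941/10000:ℝ)) ≤ s * ((44023/10000:ℝ) - (21941/10000:ℝ)) :=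
    mul_le_mul_of_nonneg_right ha (by norm_num)
  linarith [h1, h2, h3]

lemma key_iv_7 {s : ℝ} (ha : (41/25:ℝ) ≤ s) (hb : s ≤ (87/50:ℝ)) :
    s ^ cE - 1 ≤ (s - 1) * (s + 1) ^ (cE - 1) := by
  have hs0 : (0:ℝ) < s := by linarith
  have hcl := cE_lb
  have hcu := cE_ub
  have hA : (46509/10000:ℝ) ≤ (s+1) ^ (cE - 1) := by
    have e4 : (46509/10000:ℝ) ≤ (66/25:ℝ) ^ ((19:ℝ)/12) := by
      have := le_rdiv (a := (66/25:ℝ)) (b := (46509/10000:ℝ)) 19 12 (by norm_num) (by norm_num)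
        (by norm_num) (by norm_num)
      exact_mod_cast this
    calc (46509/10000:ℝ) ≤ (66/25:ℝ) ^ ((19:ℝ)/12) := e4
      _ ≤ (s+1) ^ ((19:ℝ)/12) := Real.rpow_le_rpow (by norm_num) (by linarith) (by norm_num)
      _ ≤ (s+1) ^ (cE-1) := Real.rpow_le_rpow_of_exponent_le (by linarith) (by linarith)
  have hD : s ^ (cE-1) ≤ (24103/10000:ℝ) := by
    have e5 : (87/50:ℝ) ^ ((27:ℝ)/17) ≤ (24103/10000:ℝ) := by
      have := rdiv_le (a := (87/50:ℝ)) (b := (24103/10000:ℝ)) 27 17 (by norm_num) (by norm_num)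
        (by norm_num) (by norm_num)
      exact_mod_cast this
    calc s ^ (cE-1) ≤ s ^ ((27:ℝ)/17) :=
          Real.rpow_le_rpow_of_exponent_le (by linarith) (by linarith)
      _ ≤ (87/50:ℝ) ^ ((27:ℝ)/17) := Real.rpow_le_rpow (by linarith) hb (by norm_num)
      _ ≤ (24103/10000:ℝ) := e5
  have hsc : s ^ cE = s * s ^ (cE - 1) := by
    rw [show cE = 1 + (cE - 1) by ring, Real.rpow_one_add' (le_of_lt hs0) (by intro h; nlinarith)]
    ring_nf
  have h1 : s ^ cE ≤ s * (24103/10000:ℝ) := by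
    rw [hsc]; exact mul_le_mul_of_nonneg_left hD (le_of_lt hs0)
  have h2 : (s-1) * (46509/10000:ℝ) ≤ (s-1) * (s+1) ^ (cE-1) :=
    mul_le_mul_of_nonneg_left hA (by linarith)
  have h3 : (41/25:ℝ) * ((46509/10000:ℝ) - (24103/10000:ℝ)) ≤ s * ((46509/10000:ℝ) - (24103/10000:ℝ)) :=
    mul_le_mul_of_nonneg_right ha (by norm_num)
  linarith [h1, h2, h3]

lemma key_iv_8 {s : ℝ} (ha : (87/50:ℝ) ≤ s) (hb : s ≤ (37/20:ℝ)) :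
    s ^ cE - 1 ≤ (s - 1) * (s + 1) ^ (cE - 1) := by
  have hs0 : (0:ℝ) < s := by linarith
  have hcl := cE_lb
  have hcu := cE_ub
  have hA : (49329/10000:ℝ) ≤ (s+1) ^ (cE - 1) := by
    have e4 : (49329/10000:ℝ) ≤ (137/50:ℝ) ^ ((19:ℝ)/12) := by
      have := le_rdiv (a := (137/50:ℝ)) (b := (49329/10000:ℝ)) 19 12 (by norm_num) (by norm_num)
        (by norm_num) (by norm_num)
      exact_mod_cast this
    calc (49329/10000:ℝ) ≤ (137/50:ℝ) ^ ((19:ℝ)/12) := e4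
      _ ≤ (s+1) ^ ((19:ℝ)/12) := Real.rpow_le_rpow (by norm_num) (by linarith) (by norm_num)
      _ ≤ (s+1) ^ (cE-1) := Real.rpow_le_rpow_of_exponent_le (by linarith) (by linarith)
  have hD : s ^ (cE-1) ≤ (3321/1250:ℝ) := by
    have e5 : (37/20:ℝ) ^ ((27:ℝ)/17) ≤ (3321/1250:ℝ) := by
      have := rdiv_le (a := (37/20:ℝ)) (b := (3321/1250:ℝ)) 27 17 (by norm_num) (by norm_num)
        (by norm_num) (by norm_num)
      exact_mod_cast this
    calc s ^ (cE-1) ≤ s ^ ((27:ℝ)/17) :=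
          Real.rpow_le_rpow_of_exponent_le (by linarith) (by linarith)
      _ ≤ (37/20:ℝ) ^ ((27:ℝ)/17) := Real.rpow_le_rpow (by linarith) hb (by norm_num)
      _ ≤ (3321/1250:ℝ) := e5
  have hsc : s ^ cE = s * s ^ (cE - 1) := by
    rw [show cE = 1 + (cE - 1) by ring, Real.rpow_one_add' (le_of_lt hs0) (by intro h; nlinarith)]
    ring_nf
  have h1 : s ^ cE ≤ s * (3321/1250:ℝ) := by
    rw [hsc]; exact mul_le_mul_of_nonneg_left hD (le_of_lt hs0)
  have h2 : (s-1) * (49329/10000:ℝ) ≤ (s-1) * (s+1) ^ (cE-1) :=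
    mul_le_mul_of_nonneg_left hA (by linarith)
  have h3 : (87/50:ℝ) * ((49329/10000:ℝ) - (3321/1250:ℝ)) ≤ s * ((49329/10000:ℝ) - (3321/1250:ℝ)) :=
    mul_le_mul_of_nonneg_right ha (by norm_num)
  linarith [h1, h2, h3]

lemma key_iv_9 {s : ℝ} (ha : (37/20:ℝ) ≤ s) (hb : s ≤ (197/100:ℝ)) :
    s ^ cE - 1 ≤ (s - 1) * (s + 1) ^ (cE - 1) := by
  have hs0 : (0:ℝ) < s := by linarith
  have hcl := cE_lb
  have hcu := cE_ub
  have hA : (52501/10000:ℝ) ≤ (s+1) ^ (cE - 1) := by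
    have e4 : (52501/10000:ℝ) ≤ (57/20:ℝ) ^ ((19:ℝ)/12) := by
      have := le_rdiv (a := (57/20:ℝ)) (b := (52501/10000:ℝ)) 19 12 (by norm_num) (by norm_num)
        (by norm_num) (by norm_num)
      exact_mod_cast this
    calc (52501/10000:ℝ) ≤ (57/20:ℝ) ^ ((19:ℝ)/12) := e4
      _ ≤ (s+1) ^ ((19:ℝ)/12) := Real.rpow_le_rpow (by norm_num) (by linarith) (by norm_num)
      _ ≤ (s+1) ^ (cE-1) := Real.rpow_le_rpow_of_exponent_le (by linarith) (by linarith)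
  have hD : s ^ (cE-1) ≤ (7339/2500:ℝ) := by
    have e5 : (197/100:ℝ) ^ ((27:ℝ)/17) ≤ (7339/2500:ℝ) := by
      have := rdiv_le (a := (197/100:ℝ)) (b := (7339/2500:ℝ)) 27 17 (by norm_num) (by norm_num)
        (by norm_num) (by norm_num)
      exact_mod_cast this
    calc s ^ (cE-1) ≤ s ^ ((27:ℝ)/17) :=
          Real.rpow_le_rpow_of_exponent_le (by linarith) (by linarith)
      _ ≤ (197/100:ℝ) ^ ((27:ℝ)/17) := Real.rpow_le_rpow (by linarith) hb (by norm_num)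
      _ ≤ (7339/2500:ℝ) := e5
  have hsc : s ^ cE = s * s ^ (cE - 1) := by
    rw [show cE = 1 + (cE - 1) by ring, Real.rpow_one_add' (le_of_lt hs0) (by intro h; nlinarith)]
    ring_nf
  have h1 : s ^ cE ≤ s * (7339/2500:ℝ) := by
    rw [hsc]; exact mul_le_mul_of_nonneg_left hD (le_of_lt hs0)
  have h2 : (s-1) * (52501/10000:ℝ) ≤ (s-1) * (s+1) ^ (cE-1) :=
    mul_le_mul_of_nonneg_left hA (by linarith)
  have h3 : (37/20:ℝ) * ((52501/10000:ℝ) - (7339/2500:ℝ)) ≤ s * ((52501/10000:ℝ) - (7339/2500:ℝ)) :=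
    mul_le_mul_of_nonneg_right ha (by norm_num)
  linarith [h1, h2, h3]

lemma key_iv_10 {s : ℝ} (ha : (197/100:ℝ) ≤ s) (hb : s ≤ (21/10:ℝ)) :
    s ^ cE - 1 ≤ (s - 1) * (s + 1) ^ (cE - 1) := by
  have hs0 : (0:ℝ) < s := by linarith
  have hcl := cE_lb
  have hcu := cE_ub
  have hA : (14011/2500:ℝ) ≤ (s+1) ^ (cE - 1) := by
    have e4 : (14011/2500:ℝ) ≤ (297/100:ℝ) ^ ((19:ℝ)/12) := by
      have := le_rdiv (a := (297/100:ℝ)) (b := (14011/2500:ℝ)) 19 12 (by norm_num) (by norm_num)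
        (by norm_num) (by norm_num)
      exact_mod_cast this
    calc (14011/2500:ℝ) ≤ (297/100:ℝ) ^ ((19:ℝ)/12) := e4
      _ ≤ (s+1) ^ ((19:ℝ)/12) := Real.rpow_le_rpow (by norm_num) (by linarith) (by norm_num)
      _ ≤ (s+1) ^ (cE-1) := Real.rpow_le_rpow_of_exponent_le (by linarith) (by linarith)
  have hD : s ^ (cE-1) ≤ (8123/2500:ℝ) := by
    have e5 : (21/10:ℝ) ^ ((27:ℝ)/17) ≤ (8123/2500:ℝ) := by
      have := rdiv_le (a := (21/10:ℝ)) (b := (8123/2500:ℝ)) 27 17 (by norm_num) (by norm_num)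
        (by norm_num) (by norm_num)
      exact_mod_cast this
    calc s ^ (cE-1) ≤ s ^ ((27:ℝ)/17) :=
          Real.rpow_le_rpow_of_exponent_le (by linarith) (by linarith)
      _ ≤ (21/10:ℝ) ^ ((27:ℝ)/17) := Real.rpow_le_rpow (by linarith) hb (by norm_num)
      _ ≤ (8123/2500:ℝ) := e5
  have hsc : s ^ cE = s * s ^ (cE - 1) := by
    rw [show cE = 1 + (cE - 1) by ring, Real.rpow_one_add' (le_of_lt hs0) (by intro h; nlinarith)]
    ring_nf
  have h1 : s ^ cE ≤ s * (8123/2500:ℝ) := by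
    rw [hsc]; exact mul_le_mul_of_nonneg_left hD (le_of_lt hs0)
  have h2 : (s-1) * (14011/2500:ℝ) ≤ (s-1) * (s+1) ^ (cE-1) :=
    mul_le_mul_of_nonneg_left hA (by linarith)
  have h3 : (197/100:ℝ) * ((14011/2500:ℝ) - (8123/2500:ℝ)) ≤ s * ((14011/2500:ℝ) - (8123/2500:ℝ)) :=
    mul_le_mul_of_nonneg_right ha (by norm_num)
  linarith [h1, h2, h3]

lemma key_iv_11 {s : ℝ} (ha : (21/10:ℝ) ≤ s) (hb : s ≤ (56/25:ℝ)) :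
    s ^ cE - 1 ≤ (s - 1) * (s + 1) ^ (cE - 1) := by
  have hs0 : (0:ℝ) < s := by linarith
  have hcl := cE_lb
  have hcu := cE_ub
  have hA : (59977/10000:ℝ) ≤ (s+1) ^ (cE - 1) := by
    have e4 : (59977/10000:ℝ) ≤ (31/10:ℝ) ^ ((19:ℝ)/12) := by
      have := le_rdiv (a := (31/10:ℝ)) (b := (59977/10000:ℝ)) 19 12 (by norm_num) (by norm_num)
        (by norm_num) (by norm_num)
      exact_mod_cast this
    calc (59977/10000:ℝ) ≤ (31/10:ℝ) ^ ((19:ℝ)/12) := e4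
      _ ≤ (s+1) ^ ((19:ℝ)/12) := Real.rpow_le_rpow (by norm_num) (by linarith) (by norm_num)
      _ ≤ (s+1) ^ (cE-1) := Real.rpow_le_rpow_of_exponent_le (by linarith) (by linarith)
  have hD : s ^ (cE-1) ≤ (35999/10000:ℝ) := by
    have e5 : (56/25:ℝ) ^ ((27:ℝ)/17) ≤ (35999/10000:ℝ) := by
      have := rdiv_le (a := (56/25:ℝ)) (b := (35999/10000:ℝ)) 27 17 (by norm_num) (by norm_num)
        (by norm_num) (by norm_num)
      exact_mod_cast this
    calc s ^ (cE-1) ≤ s ^ ((27:ℝ)/17) :=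
          Real.rpow_le_rpow_of_exponent_le (by linarith) (by linarith)
      _ ≤ (56/25:ℝ) ^ ((27:ℝ)/17) := Real.rpow_le_rpow (by linarith) hb (by norm_num)
      _ ≤ (35999/10000:ℝ) := e5
  have hsc : s ^ cE = s * s ^ (cE - 1) := by
    rw [show cE = 1 + (cE - 1) by ring, Real.rpow_one_add' (le_of_lt hs0) (by intro h; nlinarith)]
    ring_nf
  have h1 : s ^ cE ≤ s * (35999/10000:ℝ) := by
    rw [hsc]; exact mul_le_mul_of_nonneg_left hD (le_of_lt hs0)
  have h2 : (s-1) * (59977/10000:ℝ) ≤ (s-1) * (s+1) ^ (cE-1) :=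
    mul_le_mul_of_nonneg_left hA (by linarith)
  have h3 : (21/10:ℝ) * ((59977/10000:ℝ) - (35999/10000:ℝ)) ≤ s * ((59977/10000:ℝ) - (35999/10000:ℝ)) :=
    mul_le_mul_of_nonneg_right ha (by norm_num)
  linarith [h1, h2, h3]

lemma key_iv_12 {s : ℝ} (ha : (56/25:ℝ) ≤ s) (hb : s ≤ (239/100:ℝ)) :
    s ^ cE - 1 ≤ (s - 1) * (s + 1) ^ (cE - 1) := by
  have hs0 : (0:ℝ) < s := by linarith
  have hcl := cE_lb
  have hcu := cE_ub
  have hA : (32161/5000:ℝ) ≤ (s+1) ^ (cE - 1) := by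
    have e4 : (32161/5000:ℝ) ≤ (81/25:ℝ) ^ ((19:ℝ)/12) := by
      have := le_rdiv (a := (81/25:ℝ)) (b := (32161/5000:ℝ)) 19 12 (by norm_num) (by norm_num)
        (by norm_num) (by norm_num)
      exact_mod_cast this
    calc (32161/5000:ℝ) ≤ (81/25:ℝ) ^ ((19:ℝ)/12) := e4
      _ ≤ (s+1) ^ ((19:ℝ)/12) := Real.rpow_le_rpow (by norm_num) (by linarith) (by norm_num)
      _ ≤ (s+1) ^ (cE-1) := Real.rpow_le_rpow_of_exponent_le (by linarith) (by linarith)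
  have hD : s ^ (cE-1) ≤ (39903/10000:ℝ) := by
    have e5 : (239/100:ℝ) ^ ((27:ℝ)/17) ≤ (39903/10000:ℝ) := by
      have := rdiv_le (a := (239/100:ℝ)) (b := (39903/10000:ℝ)) 27 17 (by norm_num) (by norm_num)
        (by norm_num) (by norm_num)
      exact_mod_cast this
    calc s ^ (cE-1) ≤ s ^ ((27:ℝ)/17) :=
          Real.rpow_le_rpow_of_exponent_le (by linarith) (by linarith)
      _ ≤ (239/100:ℝ) ^ ((27:ℝ)/17) := Real.rpow_le_rpow (by linarith) hb (by norm_num)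
      _ ≤ (39903/10000:ℝ) := e5
  have hsc : s ^ cE = s * s ^ (cE - 1) := by
    rw [show cE = 1 + (cE - 1) by ring, Real.rpow_one_add' (le_of_lt hs0) (by intro h; nlinarith)]
    ring_nf
  have h1 : s ^ cE ≤ s * (39903/10000:ℝ) := by
    rw [hsc]; exact mul_le_mul_of_nonneg_left hD (le_of_lt hs0)
  have h2 : (s-1) * (32161/5000:ℝ) ≤ (s-1) * (s+1) ^ (cE-1) :=
    mul_le_mul_of_nonneg_left hA (by linarith)
  have h3 : (56/25:ℝ) * ((32161/5000:ℝ) - (39903/10000:ℝ)) ≤ s * ((32161/5000:ℝ) - (39903/10000:ℝ)) :=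
    mul_le_mul_of_nonneg_right ha (by norm_num)
  linarith [h1, h2, h3]

lemma key_iv_13 {s : ℝ} (ha : (239/100:ℝ) ≤ s) (hb : s ≤ (51/20:ℝ)) :
    s ^ cE - 1 ≤ (s - 1) * (s + 1) ^ (cE - 1) := by
  have hs0 : (0:ℝ) < s := by linarith
  have hcl := cE_lb
  have hcu := cE_ub
  have hA : (691/100:ℝ) ≤ (s+1) ^ (cE - 1) := by
    have e4 : (691/100:ℝ) ≤ (339/100:ℝ) ^ ((19:ℝ)/12) := by
      have := le_rdiv (a := (339/100:ℝ)) (b := (691/100:ℝ)) 19 12 (by norm_num) (by norm_num)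
        (by norm_num) (by norm_num)
      exact_mod_cast this
    calc (691/100:ℝ) ≤ (339/100:ℝ) ^ ((19:ℝ)/12) := e4
      _ ≤ (s+1) ^ ((19:ℝ)/12) := Real.rpow_le_rpow (by norm_num) (by linarith) (by norm_num)
      _ ≤ (s+1) ^ (cE-1) := Real.rpow_le_rpow_of_exponent_le (by linarith) (by linarith)
  have hD : s ^ (cE-1) ≤ (11057/2500:ℝ) := by
    have e5 : (51/20:ℝ) ^ ((27:ℝ)/17) ≤ (11057/2500:ℝ) := by
      have := rdiv_le (a := (51/20:ℝ)) (b := (11057/2500:ℝ)) 27 17 (by norm_num) (by norm_num)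
        (by norm_num) (by norm_num)
      exact_mod_cast this
    calc s ^ (cE-1) ≤ s ^ ((27:ℝ)/17) :=
          Real.rpow_le_rpow_of_exponent_le (by linarith) (by linarith)
      _ ≤ (51/20:ℝ) ^ ((27:ℝ)/17) := Real.rpow_le_rpow (by linarith) hb (by norm_num)
      _ ≤ (11057/2500:ℝ) := e5
  have hsc : s ^ cE = s * s ^ (cE - 1) := by
    rw [show cE = 1 + (cE - 1) by ring, Real.rpow_one_add' (le_of_lt hs0) (by intro h; nlinarith)]
    ring_nf
  have h1 : s ^ cE ≤ s * (11057/2500:ℝ) := by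
    rw [hsc]; exact mul_le_mul_of_nonneg_left hD (le_of_lt hs0)
  have h2 : (s-1) * (691/100:ℝ) ≤ (s-1) * (s+1) ^ (cE-1) :=
    mul_le_mul_of_nonneg_left hA (by linarith)
  have h3 : (239/100:ℝ) * ((691/100:ℝ) - (11057/2500:ℝ)) ≤ s * ((691/100:ℝ) - (11057/2500:ℝ)) :=
    mul_le_mul_of_nonneg_right ha (by norm_num)
  linarith [h1, h2, h3]

lemma key_iv_14 {s : ℝ} (ha : (51/20:ℝ) ≤ s) (hb : s ≤ (68/25:ℝ)) :
    s ^ cE - 1 ≤ (s - 1) * (s + 1) ^ (cE - 1) := by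
  have hs0 : (0:ℝ) < s := by linarith
  have hcl := cE_lb
  have hcu := cE_ub
  have hA : (14867/2000:ℝ) ≤ (s+1) ^ (cE - 1) := by
    have e4 : (14867/2000:ℝ) ≤ (71/20:ℝ) ^ ((19:ℝ)/12) := by
      have := le_rdiv (a := (71/20:ℝ)) (b := (14867/2000:ℝ)) 19 12 (by norm_num) (by norm_num)
        (by norm_num) (by norm_num)
      exact_mod_cast this
    calc (14867/2000:ℝ) ≤ (71/20:ℝ) ^ ((19:ℝ)/12) := e4
      _ ≤ (s+1) ^ ((19:ℝ)/12) := Real.rpow_le_rpow (by norm_num) (by linarith) (by norm_num)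
      _ ≤ (s+1) ^ (cE-1) := Real.rpow_le_rpow_of_exponent_le (by linarith) (by linarith)
  have hD : s ^ (cE-1) ≤ (24501/5000:ℝ) := by
    have e5 : (68/25:ℝ) ^ ((27:ℝ)/17) ≤ (24501/5000:ℝ) := by
      have := rdiv_le (a := (68/25:ℝ)) (b := (24501/5000:ℝ)) 27 17 (by norm_num) (by norm_num)
        (by norm_num) (by norm_num)
      exact_mod_cast this
    calc s ^ (cE-1) ≤ s ^ ((27:ℝ)/17) :=
          Real.rpow_le_rpow_of_exponent_le (by linarith) (by linarith)
      _ ≤ (68/25:ℝ) ^ ((27:ℝ)/17) := Real.rpow_le_rpow (by linarith) hb (by norm_num)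
      _ ≤ (24501/5000:ℝ) := e5
  have hsc : s ^ cE = s * s ^ (cE - 1) := by
    rw [show cE = 1 + (cE - 1) by ring, Real.rpow_one_add' (le_of_lt hs0) (by intro h; nlinarith)]
    ring_nf
  have h1 : s ^ cE ≤ s * (24501/5000:ℝ) := by
    rw [hsc]; exact mul_le_mul_of_nonneg_left hD (le_of_lt hs0)
  have h2 : (s-1) * (14867/2000:ℝ) ≤ (s-1) * (s+1) ^ (cE-1) :=
    mul_le_mul_of_nonneg_left hA (by linarith)
  have h3 : (51/20:ℝ) * ((14867/2000:ℝ) - (24501/5000:ℝ)) ≤ s * ((14867/2000:ℝ) - (24501/5000:ℝ)) :=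
    mul_le_mul_of_nonneg_right ha (by norm_num)
  linarith [h1, h2, h3]

lemma key_iv_15 {s : ℝ} (ha : (68/25:ℝ) ≤ s) (hb : s ≤ (29/10:ℝ)) :
    s ^ cE - 1 ≤ (s - 1) * (s + 1) ^ (cE - 1) := by
  have hs0 : (0:ℝ) < s := by linarith
  have hcl := cE_lb
  have hcu := cE_ub
  have hA : (80049/10000:ℝ) ≤ (s+1) ^ (cE - 1) := by
    have e4 : (80049/10000:ℝ) ≤ (93/25:ℝ) ^ ((19:ℝ)/12) := by
      have := le_rdiv (a := (93/25:ℝ)) (b := (80049/10000:ℝ)) 19 12 (by norm_num) (by norm_num)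
        (by norm_num) (by norm_num)
      exact_mod_cast this
    calc (80049/10000:ℝ) ≤ (93/25:ℝ) ^ ((19:ℝ)/12) := e4
      _ ≤ (s+1) ^ ((19:ℝ)/12) := Real.rpow_le_rpow (by norm_num) (by linarith) (by norm_num)
      _ ≤ (s+1) ^ (cE-1) := Real.rpow_le_rpow_of_exponent_le (by linarith) (by linarith)
  have hD : s ^ (cE-1) ≤ (54251/10000:ℝ) := by
    have e5 : (29/10:ℝ) ^ ((27:ℝ)/17) ≤ (54251/10000:ℝ) := by
      have := rdiv_le (a := (29/10:ℝ)) (b := (54251/10000:ℝ)) 27 17 (by norm_num) (by norm_num)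
        (by norm_num) (by norm_num)
      exact_mod_cast this
    calc s ^ (cE-1) ≤ s ^ ((27:ℝ)/17) :=
          Real.rpow_le_rpow_of_exponent_le (by linarith) (by linarith)
      _ ≤ (29/10:ℝ) ^ ((27:ℝ)/17) := Real.rpow_le_rpow (by linarith) hb (by norm_num)
      _ ≤ (54251/10000:ℝ) := e5
  have hsc : s ^ cE = s * s ^ (cE - 1) := by
    rw [show cE = 1 + (cE - 1) by ring, Real.rpow_one_add' (le_of_lt hs0) (by intro h; nlinarith)]
    ring_nf
  have h1 : s ^ cE ≤ s * (54251/10000:ℝ) := by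
    rw [hsc]; exact mul_le_mul_of_nonneg_left hD (le_of_lt hs0)
  have h2 : (s-1) * (80049/10000:ℝ) ≤ (s-1) * (s+1) ^ (cE-1) :=
    mul_le_mul_of_nonneg_left hA (by linarith)
  have h3 : (68/25:ℝ) * ((80049/10000:ℝ) - (54251/10000:ℝ)) ≤ s * ((80049/10000:ℝ) - (54251/10000:ℝ)) :=
    mul_le_mul_of_nonneg_right ha (by norm_num)
  linarith [h1, h2, h3]

lemma key_iv_16 {s : ℝ} (ha : (29/10:ℝ) ≤ s) (hb : s ≤ (3:ℝ)) :
    s ^ cE - 1 ≤ (s - 1) * (s + 1) ^ (cE - 1) := by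
  have hs0 : (0:ℝ) < s := by linarith
  have hcl := cE_lb
  have hcu := cE_ub
  have hA : (21567/2500:ℝ) ≤ (s+1) ^ (cE - 1) := by
    have e4 : (21567/2500:ℝ) ≤ (39/10:ℝ) ^ ((19:ℝ)/12) := by
      have := le_rdiv (a := (39/10:ℝ)) (b := (21567/2500:ℝ)) 19 12 (by norm_num) (by norm_num)
        (by norm_num) (by norm_num)
      exact_mod_cast this
    calc (21567/2500:ℝ) ≤ (39/10:ℝ) ^ ((19:ℝ)/12) := e4
      _ ≤ (s+1) ^ ((19:ℝ)/12) := Real.rpow_le_rpow (by norm_num) (by linarith) (by norm_num)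
      _ ≤ (s+1) ^ (cE-1) := Real.rpow_le_rpow_of_exponent_le (by linarith) (by linarith)
  have hD : s ^ (cE-1) ≤ (14313/2500:ℝ) := by
    have e5 : (3:ℝ) ^ ((27:ℝ)/17) ≤ (14313/2500:ℝ) := by
      have := rdiv_le (a := (3:ℝ)) (b := (14313/2500:ℝ)) 27 17 (by norm_num) (by norm_num)
        (by norm_num) (by norm_num)
      exact_mod_cast this
    calc s ^ (cE-1) ≤ s ^ ((27:ℝ)/17) :=
          Real.rpow_le_rpow_of_exponent_le (by linarith) (by linarith)
      _ ≤ (3:ℝ) ^ ((27:ℝ)/17) := Real.rpow_le_rpow (by linarith) hb (by norm_num)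
      _ ≤ (14313/2500:ℝ) := e5
  have hsc : s ^ cE = s * s ^ (cE - 1) := by
    rw [show cE = 1 + (cE - 1) by ring, Real.rpow_one_add' (le_of_lt hs0) (by intro h; nlinarith)]
    ring_nf
  have h1 : s ^ cE ≤ s * (14313/2500:ℝ) := by
    rw [hsc]; exact mul_le_mul_of_nonneg_left hD (le_of_lt hs0)
  have h2 : (s-1) * (21567/2500:ℝ) ≤ (s-1) * (s+1) ^ (cE-1) :=
    mul_le_mul_of_nonneg_left hA (by linarith)
  have h3 : (29/10:ℝ) * ((21567/2500:ℝ) - (14313/2500:ℝ)) ≤ s * ((21567/2500:ℝ) - (14313/2500:ℝ)) :=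
    mul_le_mul_of_nonneg_right ha (by norm_num)
  linarith [h1, h2, h3]

lemma key_region2 {s : ℝ} (hs : (6/5:ℝ) ≤ s) (hs3 : s ≤ 3) :
    s ^ cE - 1 ≤ (s - 1) * (s + 1) ^ (cE - 1) := by
  rcases le_or_gt s (31/25:ℝ) with h0 | h0
  · exact key_iv_0 (by linarith) h0
  rcases le_or_gt s (129/100:ℝ) with h1 | h1
  · exact key_iv_1 (by linarith) h1
  rcases le_or_gt s (67/50:ℝ) with h2 | h2
  · exact key_iv_2 (by linarith) h2
  rcases le_or_gt s (7/5:ℝ) with h3 | h3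
  · exact key_iv_3 (by linarith) h3
  rcases le_or_gt s (147/100:ℝ) with h4 | h4
  · exact key_iv_4 (by linarith) h4
  rcases le_or_gt s (31/20:ℝ) with h5 | h5
  · exact key_iv_5 (by linarith) h5
  rcases le_or_gt s (41/25:ℝ) with h6 | h6
  · exact key_iv_6 (by linarith) h6
  rcases le_or_gt s (87/50:ℝ) with h7 | h7
  · exact key_iv_7 (by linarith) h7
  rcases le_or_gt s (37/20:ℝ) with h8 | h8
  · exact key_iv_8 (by linarith) h8
  rcases le_or_gt s (197/100:ℝ) with h9 | h9
  · exact key_iv_9 (by linarith) h9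
  rcases le_or_gt s (21/10:ℝ) with h10 | h10
  · exact key_iv_10 (by linarith) h10
  rcases le_or_gt s (56/25:ℝ) with h11 | h11
  · exact key_iv_11 (by linarith) h11
  rcases le_or_gt s (239/100:ℝ) with h12 | h12
  · exact key_iv_12 (by linarith) h12
  rcases le_or_gt s (51/20:ℝ) with h13 | h13
  · exact key_iv_13 (by linarith) h13
  rcases le_or_gt s (68/25:ℝ) with h14 | h14
  · exact key_iv_14 (by linarith) h14
  rcases le_or_gt s (29/10:ℝ) with h15 | h15
  · exact key_iv_15 (by linarith) h15
  exact key_iv_16 (by linarith) hs3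


lemma key_ineq {s : ℝ} (hs : 1 ≤ s) :
    s ^ cE - 1 ≤ (s - 1) * (s + 1) ^ (cE - 1) := by
  rcases le_or_gt s (6/5) with h | h
  · exact key_region1 hs h
  rcases le_or_gt s 3 with h2 | h2
  · exact key_region2 (le_of_lt h) h2
  · exact key_region3 (le_of_lt h2)
noncomputable def gE (v : ℝ) : ℝ := (v + v⁻¹) ^ cE - v ^ cE - (v⁻¹) ^ cE

noncomputable def gE' (v : ℝ) : ℝ :=
  (1 + -(v^2)⁻¹) * cE * (v + v⁻¹) ^ (cE - 1) - 1 * cE * v ^ (cE-1)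
    - (-(v^2)⁻¹) * cE * (v⁻¹) ^ (cE-1)

lemma gE_hasDeriv {v : ℝ} (hv : 0 < v) : HasDerivAt gE (gE' v) v := by
  have hvne : v ≠ 0 := ne_of_gt hv
  have hsum : 0 < v + v⁻¹ := by positivity
  have h1 : HasDerivAt (fun y : ℝ => y + y⁻¹) (1 + -(v^2)⁻¹) v :=
    (hasDerivAt_id v).add (hasDerivAt_inv hvne)
  have h2 := h1.rpow_const (p := cE) (Or.inl (ne_of_gt hsum))
  have h3 := (hasDerivAt_id v).rpow_const (p := cE) (Or.inl hvne)
  have h4 := (hasDerivAt_inv hvne).rpow_const (p := cE) (Or.inl (inv_ne_zero hvne))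
  exact (h2.sub h3).sub h4

lemma gE'_nonneg {v : ℝ} (hv : 1 < v) : 0 ≤ gE' v := by
  have hv0 : (0:ℝ) < v := by linarith
  have hvne : v ≠ 0 := ne_of_gt hv0
  have hP : 0 < v ^ (cE - 1) := Real.rpow_pos_of_pos hv0 _
  set P := v ^ (cE - 1) with hPdef
  set Q := (v^2 + 1) ^ (cE - 1) with hQdef
  have hQ : 0 < Q := Real.rpow_pos_of_pos (by positivity) _
  have hs1 : (1:ℝ) ≤ v^2 := by nlinarith
  have e1 : (v⁻¹) ^ (cE - 1) = P⁻¹ := by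
    rw [hPdef, ← Real.inv_rpow (le_of_lt hv0)]
  have e2 : (v + v⁻¹) ^ (cE - 1) = Q * P⁻¹ := by
    have hvv : v + v⁻¹ = (v^2 + 1) * v⁻¹ := by field_simp
    rw [hvv, Real.mul_rpow (by positivity) (by positivity), e1]
  have e3 : (v^2) ^ cE = P^2 * v^2 := by
    have a1 : ((v:ℝ)^2) ^ cE = v ^ (2 * cE) := by
      rw [← Real.rpow_natCast v 2, ← Real.rpow_mul (le_of_lt hv0)]
      norm_num
    have a2 : P^2 = v ^ (2*cE - 2) := by
      rw [hPdef, ← Real.rpow_natCast (v ^ (cE-1)) 2, ← Real.rpow_mul (le_of_lt hv0)]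
      ring_nf
    have a3 : (v:ℝ)^2 = v ^ ((2:ℕ):ℝ) := (Real.rpow_natCast v 2).symm
    rw [a1, a2, a3, ← Real.rpow_add hv0]
    congr 1
    push_cast
    ring
  have hkey : 0 ≤ (v^2 - 1) * Q - P^2 * v^2 + 1 := by
    have := key_ineq hs1
    rw [e3] at this
    linarith
  have hcpos : (0:ℝ) < cE := lt_of_lt_of_le (by norm_num) cE_lb
  have hfact : gE' v * (v^2 * P) = cE * ((v^2 - 1) * Q - P^2 * v^2 + 1) := by
    simp only [gE', e1, e2]
    field_simp
    ring
  have h6 : 0 ≤ gE' v * (v^2 * P) := by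
    rw [hfact]
    exact mul_nonneg (le_of_lt hcpos) hkey
  by_contra hneg
  push_neg at hneg
  have : gE' v * (v^2 * P) < 0 := mul_neg_of_neg_of_pos hneg (by positivity)
  linarith

lemma gE_mono : MonotoneOn gE (Set.Ici 1) := by
  apply monotoneOn_of_deriv_nonneg (convex_Ici 1)
  · intro v hv
    have hv0 : (0:ℝ) < v := lt_of_lt_of_le (by norm_num) hv
    exact (gE_hasDeriv hv0).differentiableAt.continuousAt.continuousWithinAt
  · intro v hv
    rw [interior_Ici] at hv
    exact (gE_hasDeriv (by linarith [Set.mem_Ioi.mp hv])).differentiableAt.differentiableWithinAt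
  · intro v hv
    rw [interior_Ici] at hv
    have hv1 : (1:ℝ) < v := hv
    rw [(gE_hasDeriv (by linarith)).deriv]
    exact gE'_nonneg hv1

lemma psiE {v : ℝ} (hv : 1 ≤ v) : v ^ cE + (v⁻¹) ^ cE + 4 ≤ (v + v⁻¹) ^ cE := by
  have h := gE_mono (Set.self_mem_Ici) (Set.mem_Ici.mpr hv) hv
  have h1 : gE 1 = 4 := by
    simp only [gE, inv_one]
    rw [show (1:ℝ) + 1 = 2 by norm_num, cE_rpow, Real.one_rpow]
    norm_num
  simp only [gE] at h h1
  linarith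

lemma cube_key_aux {x y : ℝ} (hx : 0 ≤ y) (hy : 0 < y) (hxy : y ≤ x) :
    x ^ cE + y ^ cE + 4 * (x*y) ^ (cE/2) ≤ (x+y) ^ cE := by
  have hx0 : (0:ℝ) < x := lt_of_lt_of_le hy hxy
  set a := Real.sqrt x with hadef
  set b := Real.sqrt y with hbdef
  have ha : 0 < a := Real.sqrt_pos.mpr hx0
  have hb : 0 < b := Real.sqrt_pos.mpr hy
  have ha2 : a^2 = x := Real.sq_sqrt (le_of_lt hx0)
  have hb2 : b^2 = y := Real.sq_sqrt (le_of_lt hy)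
  have hv : (1:ℝ) ≤ a / b := by
    rw [le_div_iff₀ hb, one_mul]
    exact Real.sqrt_le_sqrt hxy
  have h := psiE hv
  have hinv : (a/b)⁻¹ = b/a := by rw [inv_div]
  rw [hinv] at h
  have hW : (0:ℝ) ≤ (a*b)^cE := le_of_lt (Real.rpow_pos_of_pos (by positivity) _)
  have h2 := mul_le_mul_of_nonneg_right h hW
  have i1 : (a/b)^cE * (a*b)^cE = x^cE := by
    rw [← Real.mul_rpow (by positivity) (by positivity), ← ha2]
    congr 1
    field_simp
  have i2 : (b/a)^cE * (a*b)^cE = y^cE := by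
    rw [← Real.mul_rpow (by positivity) (by positivity), ← hb2]
    congr 1
    field_simp
  have i3 : (a/b + b/a)^cE * (a*b)^cE = (x+y)^cE := by
    rw [← Real.mul_rpow (by positivity) (by positivity), ← ha2, ← hb2]
    congr 1
    field_simp
  have i4 : (a*b)^cE = (x*y)^(cE/2) := by
    have : a*b = (x*y) ^ ((1:ℝ)/2) := by
      rw [hadef, hbdef, ← Real.sqrt_mul (le_of_lt hx0), Real.sqrt_eq_rpow]
    rw [this, ← Real.rpow_mul (by positivity)]
    ring_nf
  rw [add_mul, add_mul, i1, i2, i3, i4] at h2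
  linarith

lemma cube_key {x y : ℝ} (hx : 0 ≤ x) (hy : 0 ≤ y) :
    x ^ cE + y ^ cE + 4 * (x*y) ^ (cE/2) ≤ (x+y) ^ cE := by
  have hcpos : (0:ℝ) < cE := lt_of_lt_of_le (by norm_num) cE_lb
  have hc0 : cE ≠ 0 := ne_of_gt hcpos
  have hc2 : cE/2 ≠ 0 := ne_of_gt (by positivity)
  rcases eq_or_lt_of_le hy with hy0 | hy0
  · rw [← hy0, mul_zero, Real.zero_rpow hc0, Real.zero_rpow hc2, add_zero, mul_zero, add_zero,
      add_zero]
  · rcases eq_or_lt_of_le hx with hx0 | hx0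
    · rw [← hx0, zero_mul, Real.zero_rpow hc0, Real.zero_rpow hc2, zero_add, mul_zero, add_zero,
        zero_add]
    · rcases le_total y x with hxy | hxy
      · exact cube_key_aux (le_of_lt hy0) hy0 hxy
      · have := cube_key_aux (le_of_lt hx0) hx0 hxy
        calc x ^ cE + y ^ cE + 4 * (x*y) ^ (cE/2)
            = y ^ cE + x ^ cE + 4 * (y*x) ^ (cE/2) := by rw [mul_comm]; ring
          _ ≤ (y+x) ^ cE := this
          _ = (x+y) ^ cE := by rw [add_comm]
def bitZ (b : Bool) : ℤ := if b then 1 else 0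

variable {n : ℕ}

lemma sum_eq_iff (x y z w : Fin (n+1) → Bool) :
    (cubeToZ x + cubeToZ y = cubeToZ z + cubeToZ w) ↔
    ((cubeToZ (Fin.init x) + cubeToZ (Fin.init y) = cubeToZ (Fin.init z) + cubeToZ (Fin.init w))
      ∧ bitZ (x (Fin.last n)) + bitZ (y (Fin.last n))
          = bitZ (z (Fin.last n)) + bitZ (w (Fin.last n))) := by
  constructor
  · intro h
    constructor
    · funext i
      have := congrFun h (Fin.castSucc i)
      simp only [cubeToZ, Fin.init, Pi.add_apply] at this ⊢; exact this
    · have := congrFun h (Fin.last n)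
      simpa [cubeToZ, bitZ] using this
  · rintro ⟨h1, h2⟩
    funext i
    refine Fin.lastCases ?_ ?_ i
    · simpa [cubeToZ, bitZ] using h2
    · intro j
      have := congrFun h1 j
      simp only [cubeToZ, Fin.init, Pi.add_apply] at this ⊢; exact this

/-- the fiber of `A` over last coordinate `b` -/
def fiber (A : Finset (Fin (n+1) → Bool)) (b : Bool) : Finset (Fin n → Bool) :=
  Finset.univ.filter (fun x => Fin.snoc x b ∈ A)

lemma card_fiber_split (A : Finset (Fin (n+1) → Bool)) :
    A.card = (fiber A false).card + (fiber A true).card := by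
  have h : A.card = ∑ b : Bool, (A.filter (fun y => y (Fin.last n) = b)).card :=
    Finset.card_eq_sum_card_fiberwise (fun y _ => Finset.mem_univ _)
  rw [h, Fintype.sum_bool]
  have key : ∀ b : Bool, (A.filter (fun y => y (Fin.last n) = b)).card = (fiber A b).card := by
    intro b
    apply Finset.card_bij (fun y _ => Fin.init y)
    · intro y hy
      simp only [Finset.mem_filter] at hy
      simp only [fiber, Finset.mem_filter, Finset.mem_univ, true_and]
      rw [← hy.2, Fin.snoc_init_self]
      exact hy.1
    · intro y1 hy1 y2 hy2 hinit
      simp only [Finset.mem_filter] at hy1 hy2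
      have : Fin.snoc (Fin.init y1) (y1 (Fin.last n)) = Fin.snoc (Fin.init y2) (y2 (Fin.last n)) := by
        rw [hinit, hy1.2, hy2.2]
      rwa [Fin.snoc_init_self, Fin.snoc_init_self] at this
    · intro x hx
      simp only [fiber, Finset.mem_filter, Finset.mem_univ, true_and] at hx
      exact ⟨Fin.snoc x b, Finset.mem_filter.mpr ⟨hx, by simp⟩, by simp⟩
  rw [key, key]
  ring
def Q4 (B₁ B₂ B₃ B₄ : Finset (Fin n → Bool)) : ℕ :=
  ((B₁ ×ˢ B₂ ×ˢ B₃ ×ˢ B₄).filter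
    (fun q => cubeToZ q.1 + cubeToZ q.2.1 = cubeToZ q.2.2.1 + cubeToZ q.2.2.2)).card

lemma Q4_swap12 (B₁ B₂ B₃ B₄ : Finset (Fin n → Bool)) :
    Q4 B₁ B₂ B₃ B₄ = Q4 B₂ B₁ B₃ B₄ := by
  apply Finset.card_bij (fun q _ => (q.2.1, q.1, q.2.2))
  · intro q hq
    simp only [Finset.mem_filter, Finset.mem_product] at hq ⊢
    obtain ⟨⟨h1, h2, h3, h4⟩, h5⟩ := hq
    exact ⟨⟨h2, h1, h3, h4⟩, by rw [add_comm (cubeToZ q.2.1)]; exact h5⟩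
  · rintro ⟨a1, a2, a3, a4⟩ h1 ⟨b1, b2, b3, b4⟩ h2 h
    simp only [Prod.mk.injEq] at h
    obtain ⟨e1, e2, e3⟩ := h
    simp [e1, e2, e3]
  · rintro ⟨a1, a2, a3, a4⟩ hq
    simp only [Finset.mem_filter, Finset.mem_product] at hq
    obtain ⟨⟨h1, h2, h3, h4⟩, h5⟩ := hq
    exact ⟨(a2, a1, a3, a4), Finset.mem_filter.mpr ⟨Finset.mem_product.mpr ⟨h2, Finset.mem_product.mpr ⟨h1, Finset.mem_product.mpr ⟨h3, h4⟩⟩⟩, by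
      simpa [add_comm] using h5⟩, rfl⟩

lemma Q4_swap34 (B₁ B₂ B₃ B₄ : Finset (Fin n → Bool)) :
    Q4 B₁ B₂ B₃ B₄ = Q4 B₁ B₂ B₄ B₃ := by
  apply Finset.card_bij (fun q _ => (q.1, q.2.1, q.2.2.2, q.2.2.1))
  · intro q hq
    simp only [Finset.mem_filter, Finset.mem_product] at hq ⊢
    obtain ⟨⟨h1, h2, h3, h4⟩, h5⟩ := hq
    exact ⟨⟨h1, h2, h4, h3⟩, by rw [add_comm (cubeToZ q.2.2.2)]; exact h5⟩
  · rintro ⟨a1, a2, a3, a4⟩ h1 ⟨b1, b2, b3, b4⟩ h2 h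
    simp only [Prod.mk.injEq] at h
    obtain ⟨e1, e2, e3, e4⟩ := h
    simp [e1, e2, e3, e4]
  · rintro ⟨a1, a2, a3, a4⟩ hq
    simp only [Finset.mem_filter, Finset.mem_product] at hq
    obtain ⟨⟨h1, h2, h3, h4⟩, h5⟩ := hq
    exact ⟨(a1, a2, a4, a3), Finset.mem_filter.mpr ⟨Finset.mem_product.mpr ⟨h1, Finset.mem_product.mpr ⟨h2, Finset.mem_product.mpr ⟨h4, h3⟩⟩⟩, by
      simpa [add_comm] using h5⟩, rfl⟩
lemma init_last_inj {y1 y2 : Fin (n+1) → Bool} (h1 : Fin.init y1 = Fin.init y2)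
    (h2 : y1 (Fin.last n) = y2 (Fin.last n)) : y1 = y2 := by
  have : Fin.snoc (Fin.init y1) (y1 (Fin.last n)) = Fin.snoc (Fin.init y2) (y2 (Fin.last n)) := by
    rw [h1, h2]
  rwa [Fin.snoc_init_self, Fin.snoc_init_self] at this

lemma N_good (A : Finset (Fin (n+1) → Bool)) (b1 b2 b3 b4 : Bool)
    (hgood : bitZ b1 + bitZ b2 = bitZ b3 + bitZ b4) :
    (((A ×ˢ A ×ˢ A ×ˢ A).filter
      (fun q => cubeToZ q.1 + cubeToZ q.2.1 = cubeToZ q.2.2.1 + cubeToZ q.2.2.2)).filter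
      (fun q => (q.1 (Fin.last n), q.2.1 (Fin.last n), q.2.2.1 (Fin.last n),
        q.2.2.2 (Fin.last n)) = (b1, b2, b3, b4))).card
    = Q4 (fiber A b1) (fiber A b2) (fiber A b3) (fiber A b4) := by
  unfold Q4
  apply Finset.card_bij
    (fun (q : (Fin (n+1) → Bool) × (Fin (n+1) → Bool) × (Fin (n+1) → Bool) × (Fin (n+1) → Bool))
      (_ : q ∈ _) =>
      ((Fin.init q.1 : Fin n → Bool), (Fin.init q.2.1 : Fin n → Bool),
        (Fin.init q.2.2.1 : Fin n → Bool), (Fin.init q.2.2.2 : Fin n → Bool)))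
  · rintro ⟨x, y, z, w⟩ hq
    simp only [Finset.mem_filter, Finset.mem_product, Prod.mk.injEq] at hq
    obtain ⟨⟨⟨hx, hy, hz, hw⟩, hsum⟩, e1, e2, e3, e4⟩ := hq
    have hs := (sum_eq_iff x y z w).mp hsum
    simp only [Finset.mem_filter, Finset.mem_product]
    refine ⟨⟨?_, ?_, ?_, ?_⟩, hs.1⟩ <;>
      simp only [fiber, Finset.mem_filter, Finset.mem_univ, true_and]
    · rw [← e1, Fin.snoc_init_self]; exact hx
    · rw [← e2, Fin.snoc_init_self]; exact hy
    · rw [← e3, Fin.snoc_init_self]; exact hz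
    · rw [← e4, Fin.snoc_init_self]; exact hw
  · rintro ⟨x1, y1, z1, w1⟩ hq1 ⟨x2, y2, z2, w2⟩ hq2 h
    simp only [Finset.mem_filter, Finset.mem_product, Prod.mk.injEq] at hq1 hq2 h
    obtain ⟨⟨_, _⟩, e1, e2, e3, e4⟩ := hq1
    obtain ⟨⟨_, _⟩, f1, f2, f3, f4⟩ := hq2
    obtain ⟨g1, g2, g3, g4⟩ := h
    simp only [Prod.mk.injEq]
    exact ⟨init_last_inj g1 (by rw [e1, f1]), init_last_inj g2 (by rw [e2, f2]),
      init_last_inj g3 (by rw [e3, f3]), init_last_inj g4 (by rw [e4, f4])⟩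
  · rintro ⟨x, y, z, w⟩ hq
    simp only [Finset.mem_filter, Finset.mem_product, fiber, Finset.mem_univ, true_and] at hq
    obtain ⟨⟨hx, hy, hz, hw⟩, hsum⟩ := hq
    refine ⟨(Fin.snoc x b1, Fin.snoc y b2, Fin.snoc z b3, Fin.snoc w b4), ?_, ?_⟩
    · simp only [Finset.mem_filter, Finset.mem_product, Prod.mk.injEq]
      refine ⟨⟨⟨hx, hy, hz, hw⟩, ?_⟩, ?_, ?_, ?_, ?_⟩
      · apply (sum_eq_iff _ _ _ _).mpr
        constructor
        · simpa only [Fin.init_snoc] using hsum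
        · simpa only [Fin.snoc_last] using hgood
      all_goals simp [Fin.snoc_last]
    · simp only [Fin.init_snoc]

lemma N_bad (A : Finset (Fin (n+1) → Bool)) (b1 b2 b3 b4 : Bool)
    (hbad : bitZ b1 + bitZ b2 ≠ bitZ b3 + bitZ b4) :
    (((A ×ˢ A ×ˢ A ×ˢ A).filter
      (fun q => cubeToZ q.1 + cubeToZ q.2.1 = cubeToZ q.2.2.1 + cubeToZ q.2.2.2)).filter
      (fun q => (q.1 (Fin.last n), q.2.1 (Fin.last n), q.2.2.1 (Fin.last n),
        q.2.2.2 (Fin.last n)) = (b1, b2, b3, b4))).card = 0 := by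
  rw [Finset.card_eq_zero, Finset.filter_eq_empty_iff]
  rintro ⟨x, y, z, w⟩ hq
  simp only [Finset.mem_filter, Finset.mem_product] at hq
  obtain ⟨_, hsum⟩ := hq
  have hs := ((sum_eq_iff x y z w).mp hsum).2
  simp only [Prod.mk.injEq, not_and]
  intro e1 e2 e3 e4
  rw [e1, e2, e3, e4] at hs
  exact hbad hs

lemma energy_split (A : Finset (Fin (n+1) → Bool)) :
    Q4 A A A A =
      Q4 (fiber A false) (fiber A false) (fiber A false) (fiber A false)
      + Q4 (fiber A true) (fiber A true) (fiber A true) (fiber A true)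
      + 4 * Q4 (fiber A false) (fiber A true) (fiber A false) (fiber A true) := by
  have h : Q4 A A A A = ∑ p : Bool × Bool × Bool × Bool,
      (((A ×ˢ A ×ˢ A ×ˢ A).filter
        (fun q => cubeToZ q.1 + cubeToZ q.2.1 = cubeToZ q.2.2.1 + cubeToZ q.2.2.2)).filter
        (fun q => (q.1 (Fin.last n), q.2.1 (Fin.last n), q.2.2.1 (Fin.last n),
          q.2.2.2 (Fin.last n)) = p)).card := by
    exact Finset.card_eq_sum_card_fiberwise (fun q _ => Finset.mem_univ _)
  rw [h]
  rw [Fintype.sum_prod_type, Fintype.sum_bool]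
  simp only [Fintype.sum_prod_type, Fintype.sum_bool]
  rw [N_good A true true true true (by simp [bitZ]),
      N_bad A true true true false (by simp [bitZ]),
      N_bad A true true false true (by simp [bitZ]),
      N_bad A true true false false (by simp [bitZ]),
      N_bad A true false true true (by simp [bitZ]),
      N_good A true false true false (by simp [bitZ]),
      N_good A true false false true (by simp [bitZ]),
      N_bad A true false false false (by simp [bitZ]),
      N_bad A false true true true (by simp [bitZ]),
      N_good A false true true false (by simp [bitZ]),
      N_good A false true false true (by simp [bitZ]),
      N_bad A false true false false (by simp [bitZ]),
      N_bad A false false true true (by simp [bitZ]),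
      N_bad A false false true false (by simp [bitZ]),
      N_bad A false false false true (by simp [bitZ]),
      N_good A false false false false (by simp [bitZ])]
  rw [Q4_swap34 (fiber A false) (fiber A true) (fiber A true) (fiber A false)]
  rw [Q4_swap12 (fiber A true) (fiber A false) (fiber A true) (fiber A false),
    Q4_swap34 (fiber A false) (fiber A true) (fiber A true) (fiber A false)]
  rw [Q4_swap12 (fiber A true) (fiber A false) (fiber A false) (fiber A true)]
  ring
lemma card_filter_prod_eq {α β G : Type*} [DecidableEq G]
    (S : Finset α) (T : Finset β) (f : α → G) (g : β → G) (J : Finset G)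
    (hJ : ∀ a ∈ S, f a ∈ J) :
    ((S ×ˢ T).filter (fun p => f p.1 = g p.2)).card
      = ∑ x ∈ J, (S.filter (fun a => f a = x)).card * (T.filter (fun b => g b = x)).card := by
  rw [Finset.card_eq_sum_card_fiberwise (f := fun p => f p.1) (t := J)
    (fun p hp => hJ p.1 (Finset.mem_product.mp (Finset.mem_filter.mp hp).1).1)]
  apply Finset.sum_congr rfl
  intro x _
  rw [← Finset.card_product]
  congr 1
  rw [Finset.filter_filter]
  ext p
  simp only [Finset.mem_filter, Finset.mem_product]
  constructor
  · rintro ⟨⟨hS, hT⟩, hfg, hfx⟩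
    exact ⟨⟨hS, hfx⟩, hT, hfg ▸ hfx⟩
  · rintro ⟨⟨hS, hfx⟩, hT, hgx⟩
    exact ⟨⟨hS, hT⟩, by rw [hfx, hgx], hfx⟩

def dCnt (B : Finset (Fin n → Bool)) (x : Fin n → ℤ) : ℕ :=
  ((B ×ˢ B).filter (fun p => cubeToZ p.1 - cubeToZ p.2 = x)).card

lemma swapD (B : Finset (Fin n → Bool)) (x : Fin n → ℤ) :
    ((B ×ˢ B).filter (fun p => cubeToZ p.2 - cubeToZ p.1 = x)).card = dCnt B x := by
  unfold dCnt
  apply Finset.card_bij (fun p _ => (p.2, p.1))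
  · rintro ⟨a, b⟩ hp
    simp only [Finset.mem_filter, Finset.mem_product] at hp ⊢
    exact ⟨⟨hp.1.2, hp.1.1⟩, hp.2⟩
  · rintro ⟨a1, b1⟩ h1 ⟨a2, b2⟩ h2 h
    simp only [Prod.mk.injEq] at h ⊢
    exact ⟨h.2, h.1⟩
  · rintro ⟨a, b⟩ hp
    simp only [Finset.mem_filter, Finset.mem_product] at hp
    exact ⟨(b, a), Finset.mem_filter.mpr ⟨Finset.mem_product.mpr ⟨hp.1.2, hp.1.1⟩, hp.2⟩, rfl⟩

lemma quad_reindex (B C : Finset (Fin n → Bool)) :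
    Q4 B C B C = (((B ×ˢ B) ×ˢ (C ×ˢ C)).filter
      (fun p => cubeToZ p.1.1 - cubeToZ p.1.2 = cubeToZ p.2.2 - cubeToZ p.2.1)).card := by
  unfold Q4
  apply Finset.card_bij (fun (q : (Fin n → Bool) × (Fin n → Bool) × (Fin n → Bool) × (Fin n → Bool))
    (_ : q ∈ _) => ((q.1, q.2.2.1), (q.2.1, q.2.2.2)))
  · rintro ⟨a, b, c, d⟩ hq
    simp only [Finset.mem_filter, Finset.mem_product] at hq ⊢
    obtain ⟨⟨h1, h2, h3, h4⟩, h5⟩ := hq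
    exact ⟨⟨⟨h1, h3⟩, h2, h4⟩, by linear_combination h5⟩
  · rintro ⟨a1, b1, c1, d1⟩ h1 ⟨a2, b2, c2, d2⟩ h2 h
    simp only [Prod.mk.injEq] at h ⊢
    exact ⟨h.1.1, h.2.1, h.1.2, h.2.2⟩
  · rintro ⟨⟨a, c⟩, ⟨b, d⟩⟩ hp
    simp only [Finset.mem_filter, Finset.mem_product] at hp
    obtain ⟨⟨⟨h1, h3⟩, h2, h4⟩, h5⟩ := hp
    exact ⟨(a, b, c, d), Finset.mem_filter.mpr ⟨Finset.mem_product.mpr ⟨h1,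
      Finset.mem_product.mpr ⟨h2, Finset.mem_product.mpr ⟨h3, h4⟩⟩⟩, by linear_combination h5⟩, rfl⟩

lemma Q4_as_sum (B C : Finset (Fin n → Bool)) (J : Finset (Fin n → ℤ))
    (hJ : ∀ p ∈ B ×ˢ B, cubeToZ p.1 - cubeToZ p.2 ∈ J) :
    Q4 B C B C = ∑ x ∈ J, dCnt B x * dCnt C x := by
  rw [quad_reindex, card_filter_prod_eq (B ×ˢ B) (C ×ˢ C)
    (fun p => cubeToZ p.1 - cubeToZ p.2) (fun p => cubeToZ p.2 - cubeToZ p.1) J hJ]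
  apply Finset.sum_congr rfl
  intro x _
  rw [swapD]
  rfl

lemma M_sq_le (F0 F1 : Finset (Fin n → Bool)) :
    Q4 F0 F1 F0 F1 ^ 2 ≤ Q4 F0 F0 F0 F0 * Q4 F1 F1 F1 F1 := by
  classical
  set D : (Fin n → Bool) × (Fin n → Bool) → (Fin n → ℤ) :=
    fun p => cubeToZ p.1 - cubeToZ p.2 with hD
  set J : Finset (Fin n → ℤ) := ((F0 ×ˢ F0).image D) ∪ ((F1 ×ˢ F1).image D) with hJdef
  have hJ0 : ∀ p ∈ F0 ×ˢ F0, cubeToZ p.1 - cubeToZ p.2 ∈ J :=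
    fun p hp => Finset.mem_union_left _ (Finset.mem_image_of_mem D hp)
  have hJ1 : ∀ p ∈ F1 ×ˢ F1, cubeToZ p.1 - cubeToZ p.2 ∈ J :=
    fun p hp => Finset.mem_union_right _ (Finset.mem_image_of_mem D hp)
  rw [Q4_as_sum F0 F1 J hJ0, Q4_as_sum F0 F0 J hJ0, Q4_as_sum F1 F1 J hJ1]
  have := Finset.sum_mul_sq_le_sq_mul_sq J (fun x => dCnt F0 x) (fun x => dCnt F1 x)
  simpa [pow_two] using this

lemma cE_pos : (0:ℝ) < cE := lt_of_lt_of_le (by norm_num) cE_lb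

lemma main_bound : ∀ n : ℕ, ∀ A : Finset (Fin n → Bool),
    (cubeEnergy A : ℝ) ≤ (A.card : ℝ) ^ cE := by
  intro n
  induction n with
  | zero =>
    intro A
    rcases Finset.eq_empty_or_nonempty A with rfl | hne
    · simp [cubeEnergy, Real.zero_rpow (ne_of_gt cE_pos)]
    · have hle : A.card ≤ 1 := Finset.card_le_one.mpr (fun a _ b _ => Subsingleton.elim a b)
      have hcard : A.card = 1 := le_antisymm hle hne.card_pos
      have h4 : (A ×ˢ A ×ˢ A ×ˢ A).card = 1 := by
        simp [Finset.card_product, hcard]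
      have hEle : cubeEnergy A ≤ 1 := by
        have := Finset.card_filter_le (A ×ˢ A ×ˢ A ×ˢ A)
          (fun q => cubeToZ q.1 + cubeToZ q.2.1 = cubeToZ q.2.2.1 + cubeToZ q.2.2.2)
        rw [h4] at this
        exact this
      rw [hcard]
      push_cast
      rw [Real.one_rpow]
      exact_mod_cast hEle
  | succ n ih =>
    intro A
    set F0 := fiber A false with hF0
    set F1 := fiber A true with hF1
    have hsplit : cubeEnergy A = Q4 F0 F0 F0 F0 + Q4 F1 F1 F1 F1 + 4 * Q4 F0 F1 F0 F1 :=
      energy_split A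
    have hcard : A.card = F0.card + F1.card := card_fiber_split A
    have hM2 : Q4 F0 F1 F0 F1 ^ 2 ≤ Q4 F0 F0 F0 F0 * Q4 F1 F1 F1 F1 := M_sq_le F0 F1
    have h0 : (Q4 F0 F0 F0 F0 : ℝ) ≤ (F0.card : ℝ) ^ cE := ih F0
    have h1 : (Q4 F1 F1 F1 F1 : ℝ) ≤ (F1.card : ℝ) ^ cE := ih F1
    set s0 := (F0.card : ℝ) with hs0
    set s1 := (F1.card : ℝ) with hs1
    have hs0n : 0 ≤ s0 := Nat.cast_nonneg _
    have hs1n : 0 ≤ s1 := Nat.cast_nonneg _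
    have hE0n : (0:ℝ) ≤ (Q4 F0 F0 F0 F0 : ℝ) := Nat.cast_nonneg _
    have hE1n : (0:ℝ) ≤ (Q4 F1 F1 F1 F1 : ℝ) := Nat.cast_nonneg _
    have hM2r : ((Q4 F0 F1 F0 F1 : ℝ)) ^ 2 ≤ (s0 ^ cE) * (s1 ^ cE) := by
      have step1 : ((Q4 F0 F1 F0 F1 : ℝ)) ^ 2 ≤ (Q4 F0 F0 F0 F0 : ℝ) * (Q4 F1 F1 F1 F1 : ℝ) := by
        exact_mod_cast hM2
      exact le_trans step1 (mul_le_mul h0 h1 hE1n (le_trans hE0n h0))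
    have hMr : (Q4 F0 F1 F0 F1 : ℝ) ≤ (s0 * s1) ^ (cE / 2) := by
      have hsq : (Q4 F0 F1 F0 F1 : ℝ) ≤ Real.sqrt ((s0 ^ cE) * (s1 ^ cE)) := by
        rw [show ((Q4 F0 F1 F0 F1 : ℝ)) = Real.sqrt (((Q4 F0 F1 F0 F1 : ℝ))^2) by
          rw [Real.sqrt_sq (Nat.cast_nonneg _)]]
        exact Real.sqrt_le_sqrt hM2r
      have heq : Real.sqrt ((s0 ^ cE) * (s1 ^ cE)) = (s0 * s1) ^ (cE / 2) := by
        rw [← Real.mul_rpow hs0n hs1n, Real.sqrt_eq_rpow,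
          ← Real.rpow_mul (mul_nonneg hs0n hs1n)]
        ring_nf
      rwa [heq] at hsq
    have hkey := cube_key hs0n hs1n
    calc (cubeEnergy A : ℝ)
        = (Q4 F0 F0 F0 F0 : ℝ) + (Q4 F1 F1 F1 F1 : ℝ) + 4 * (Q4 F0 F1 F0 F1 : ℝ) := by
          rw [hsplit]; push_cast; ring
      _ ≤ s0 ^ cE + s1 ^ cE + 4 * ((s0 * s1) ^ (cE / 2)) := by linarith
      _ ≤ (s0 + s1) ^ cE := hkey
      _ = ((A.card : ℝ)) ^ cE := by rw [hcard]; push_cast; ring_nf; rfl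

theorem stmt_16 (n : ℕ) (A : Finset (Fin n → Bool)) :
    (cubeEnergy A : ℝ) ≤ (A.card : ℝ) ^ (Real.log 6 / Real.log 2) := by
  rw [show Real.log 6 / Real.log 2 = cE from rfl]
  exact main_bound n A
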